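/- Let T be a cubic tree with at least 4 nodes in which every edge is oriented. Then T has a sink that is an internal node; moreover, if each edge e is oriented from the component Y_e toward Z_e whenever 2|L(Y_e)| < |L(Z_e)|, and every edge is so oriented, then the three subtrees hanging off an internal sink node each contain fewer than |L(T)|/3 leaves, yielding a contradiction — hence not every edge satisfies 2|L(Y_e)| < |L(Z_e)| for one of its sides. -/

import Mathlib

set_option linter.unusedSectionVars false
set_option linter.unusedVariables false

open SimpleGraph

namespace Stmt12Aux

variable {N : Type*} [Fintype N] [DecidableEq N]

lemma bridge {T : SimpleGraph N} (hT : T.IsTree) {a b : N} (hab : T.Adj a b) :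
    ¬ (T.deleteEdges {s(a, b)}).Reachable a b := by
  have h := (isAcyclic_iff_forall_adj_isBridge.mp hT.IsAcyclic) hab
  rw [isBridge_iff] at h
  exact h

lemma reach_or_aux {T : SimpleGraph N} {a b : N} {v u : N} (w : T.Walk v u) :
    (T.deleteEdges {s(a, b)}).Reachable v u ∨ (T.deleteEdges {s(a, b)}).Reachable v a ∨
      (T.deleteEdges {s(a, b)}).Reachable v b := by
  induction w with
  | nil => exact Or.inl (Reachable.refl _)
  | @cons x y z h p ih =>
    by_cases he : s(x, y) = s(a, b)
    · rw [Sym2.eq_iff] at he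
      rcases he with ⟨rfl, rfl⟩ | ⟨rfl, rfl⟩
      · exact Or.inr (Or.inl (Reachable.refl _))
      · exact Or.inr (Or.inr (Reachable.refl _))
    · have hadj : (T.deleteEdges {s(a, b)}).Adj x y := by simp [h, he]
      rcases ih with h1 | h1 | h1
      · exact Or.inl (hadj.reachable.trans h1)
      · exact Or.inr (Or.inl (hadj.reachable.trans h1))
      · exact Or.inr (Or.inr (hadj.reachable.trans h1))

lemma reach_or {T : SimpleGraph N} {a b v : N} (w : T.Walk v a) :
    (T.deleteEdges {s(a, b)}).Reachable v a ∨ (T.deleteEdges {s(a, b)}).Reachable v b := by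
  rcases reach_or_aux (a := a) (b := b) w with h | h | h
  · exact Or.inl h
  · exact Or.inl h
  · exact Or.inr h

lemma exists_walk_avoid {T : SimpleGraph N} (hT : T.IsTree) {x y v : N} (hxy : T.Adj x y)
    (h : (T.deleteEdges {s(x, y)}).Reachable v x) :
    ∃ p : (T.deleteEdges {s(x, y)}).Walk v x, y ∉ p.support := by
  obtain ⟨p⟩ := h
  refine ⟨p, fun hy => ?_⟩
  exact bridge hT hxy (Reachable.symm ⟨p.dropUntil y hy⟩)

lemma reach_transfer {T G : SimpleGraph N} (hG : G ≤ T) {v x b : N} {e : Sym2 N}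
    (p : G.Walk v x) (hb : b ∉ p.support) (hbe : b ∈ e) :
    (T.deleteEdges {e}).Reachable v x := by
  refine ⟨p.transfer _ fun f hf => ?_⟩
  rw [edgeSet_deleteEdges]
  refine ⟨edgeSet_mono hG (p.edges_subset_edgeSet hf), ?_⟩
  simp only [Set.mem_singleton_iff]
  rintro rfl
  revert hf hbe
  induction f using Sym2.ind with
  | _ c d =>
    intro hf hbe
    rw [Sym2.mem_iff] at hbe
    rcases hbe with rfl | rfl
    · exact hb (p.fst_mem_support_of_mem_edges hf)
    · exact hb (p.snd_mem_support_of_mem_edges hf)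

lemma exists_first_step {G : SimpleGraph N} {v s : N} (h : G.Reachable v s) (hvs : v ≠ s) :
    ∃ (u : N) (q : G.Walk v u), G.Adj u s ∧ s ∉ q.support := by
  obtain ⟨w⟩ := h.symm
  have hp : (w.toPath : G.Walk s v).IsPath := w.toPath.2
  obtain ⟨u, h', q, hq⟩ := Walk.exists_eq_cons_of_ne (Ne.symm hvs) (w.toPath : G.Walk s v)
  rw [hq, Walk.cons_isPath_iff] at hp
  exact ⟨u, q.reverse, h'.symm, by simpa [Walk.support_reverse] using hp.2⟩

lemma side_sum {T : SimpleGraph N} [DecidableRel T.Adj] (hT : T.IsTree) {a b : N}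
    (hab : T.Adj a b) :
    ({v : N | T.degree v = 1} ∩ {v : N | (T.deleteEdges {s(a, b)}).Reachable v a}).ncard
    + ({v : N | T.degree v = 1} ∩ {v : N | (T.deleteEdges {s(b, a)}).Reachable v b}).ncard
    = {v : N | T.degree v = 1}.ncard := by
  rw [@Sym2.eq_swap _ b a]
  rw [← Set.ncard_union_eq ?disj (Set.toFinite _) (Set.toFinite _)]
  case disj =>
    rw [Set.disjoint_left]
    rintro v ⟨-, h1⟩ ⟨-, h2⟩
    exact bridge hT hab ((Reachable.symm h1).trans h2)
  congr 1
  ext v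
  simp only [Set.mem_union, Set.mem_inter_iff, Set.mem_setOf_eq]
  constructor
  · rintro (⟨h, -⟩ | ⟨h, -⟩) <;> exact h
  · intro h
    obtain ⟨w⟩ := hT.isConnected v a
    rcases reach_or (b := b) w with h1 | h1
    · exact Or.inl ⟨h, h1⟩
    · exact Or.inr ⟨h, h1⟩

lemma deg_one_side {T : SimpleGraph N} [DecidableRel T.Adj] (hT : T.IsTree) {a b : N}
    (hab : T.Adj a b) (hb : T.degree b = 1) :
    ({v : N | T.degree v = 1} ∩ {v : N | (T.deleteEdges {s(b, a)}).Reachable v b}).ncard ≤ 1 := by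
  have hsub : ({v : N | T.degree v = 1} ∩
      {v : N | (T.deleteEdges {s(b, a)}).Reachable v b}) ⊆ {b} := by
    rintro v ⟨-, hr⟩
    by_contra hvb
    obtain ⟨u, q, hu, -⟩ := exists_first_step hr hvb
    rw [deleteEdges_adj] at hu
    have hmem : u ∈ T.neighborFinset b := by
      rw [mem_neighborFinset]; exact hu.1.symm
    have hcard : (T.neighborFinset b).card = 1 := hb
    obtain ⟨c, hc⟩ := Finset.card_eq_one.mp hcard
    have hac : a ∈ T.neighborFinset b := by rw [mem_neighborFinset]; exact hab.symm
    rw [hc, Finset.mem_singleton] at hmem hac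
    apply hu.2
    rw [hmem, hac, Set.mem_singleton_iff, Sym2.eq_swap]
  calc _ ≤ ({b} : Set N).ncard := Set.ncard_le_ncard hsub (Set.toFinite _)
    _ = 1 := Set.ncard_singleton b


-- adjacent vertices have distinct distances to a fixed vertex in a tree
lemma dist_ne {T : SimpleGraph N} (hT : T.IsTree) {b v w : N} (hvw : T.Adj v w) :
    T.dist b v ≠ T.dist b w := by
  intro heq
  have hc := hT.isConnected
  obtain ⟨p, hp⟩ := hc.exists_walk_length_eq_dist b v
  obtain ⟨q, hq⟩ := hc.exists_walk_length_eq_dist b w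
  have hpp : p.IsPath := p.isPath_of_length_eq_dist hp
  have hqp : q.IsPath := q.isPath_of_length_eq_dist hq
  have hvq : v ∉ q.support := by
    intro hv
    have h1 : T.dist b v ≤ (q.takeUntil v hv).length := T.dist_le _
    have h2 : T.dist v w ≤ (q.dropUntil v hv).length := T.dist_le _
    have h3 : (q.takeUntil v hv).length + (q.dropUntil v hv).length = q.length := by
      have := congrArg Walk.length (q.take_spec hv)
      rwa [Walk.length_append] at this
    have h4 : 0 < T.dist v w := (hvw.reachable).pos_dist_of_ne hvw.ne
    omega
  have hr : (Walk.cons hvw q.reverse).IsPath := by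
    rw [Walk.cons_isPath_iff]
    exact ⟨hqp.reverse, by simpa [Walk.support_reverse] using hvq⟩
  have hr' : (p.reverse).IsPath := hpp.reverse
  have := hT.IsAcyclic.path_unique ⟨Walk.cons hvw q.reverse, hr⟩ ⟨p.reverse, hr'⟩
  have hwalk : Walk.cons hvw q.reverse = p.reverse := congrArg Subtype.val this
  have hlen := congrArg Walk.length hwalk
  simp only [Walk.length_cons, Walk.length_reverse] at hlen
  omega

-- at most one neighbour is strictly closer to b
lemma desc_unique {T : SimpleGraph N} (hT : T.IsTree) {b v w w' : N} (hvw : T.Adj v w)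
    (hvw' : T.Adj v w') (h1 : T.dist b w < T.dist b v) (h2 : T.dist b w' < T.dist b v) :
    w = w' := by
  by_contra hne
  have hc := hT.isConnected
  have ht1 : T.dist b v ≤ T.dist b w + 1 := by
    have := hc.dist_triangle (u := b) (v := w) (w := v)
    have hd : T.dist w v ≤ 1 := by
      have := T.dist_le (Walk.cons hvw.symm Walk.nil)
      simpa using this
    omega
  have ht2 : T.dist b v ≤ T.dist b w' + 1 := by
    have := hc.dist_triangle (u := b) (v := w') (w := v)
    have hd : T.dist w' v ≤ 1 := by
      have := T.dist_le (Walk.cons hvw'.symm Walk.nil)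
      simpa using this
    omega
  obtain ⟨q, hq⟩ := hc.exists_walk_length_eq_dist b w
  obtain ⟨q', hq'⟩ := hc.exists_walk_length_eq_dist b w'
  have hqp : q.IsPath := q.isPath_of_length_eq_dist hq
  have hqp' : q'.IsPath := q'.isPath_of_length_eq_dist hq'
  have hvq : v ∉ q.support := by
    intro hv
    have h1' : T.dist b v ≤ (q.takeUntil v hv).length := T.dist_le _
    have h3 : (q.takeUntil v hv).length ≤ q.length := Walk.length_takeUntil_le q hv
    omega
  have hvq' : v ∉ q'.support := by
    intro hv
    have h1' : T.dist b v ≤ (q'.takeUntil v hv).length := T.dist_le _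
    have h3 : (q'.takeUntil v hv).length ≤ q'.length := Walk.length_takeUntil_le q' hv
    omega
  have hr : (Walk.cons hvw q.reverse).IsPath := by
    rw [Walk.cons_isPath_iff]
    exact ⟨hqp.reverse, by simpa [Walk.support_reverse] using hvq⟩
  have hr' : (Walk.cons hvw' q'.reverse).IsPath := by
    rw [Walk.cons_isPath_iff]
    exact ⟨hqp'.reverse, by simpa [Walk.support_reverse] using hvq'⟩
  have := hT.IsAcyclic.path_unique ⟨Walk.cons hvw q.reverse, hr⟩ ⟨Walk.cons hvw' q'.reverse, hr'⟩
  have hwalk : Walk.cons hvw q.reverse = Walk.cons hvw' q'.reverse :=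
    congrArg Subtype.val this
  have := congrArg (fun z => (z : T.Walk v b).getVert 1) hwalk
  simp only [Walk.getVert_cons_succ, Walk.getVert_zero] at this
  exact hne this

lemma exists_leaf_side {T : SimpleGraph N} [DecidableRel T.Adj] (hT : T.IsTree)
    (hcubic : ∀ v : N, T.degree v ≠ 1 → T.degree v = 3) {a b : N} (hab : T.Adj a b) :
    ∃ v, T.degree v = 1 ∧ (T.deleteEdges {s(a, b)}).Reachable v a := by
  classical
  set S : Finset N := Finset.univ.filter
    (fun v => (T.deleteEdges {s(a, b)}).Reachable v a) with hS
  have haS : a ∈ S := by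
    simp only [hS, Finset.mem_filter, Finset.mem_univ, true_and]
    exact Reachable.refl a
  obtain ⟨v, hvS, hmax⟩ := S.exists_max_image (fun v => T.dist b v) ⟨a, haS⟩
  have hvreach : (T.deleteEdges {s(a, b)}).Reachable v a := by
    simpa [hS] using hvS
  refine ⟨v, ?_, hvreach⟩
  by_contra hdeg
  have hv3 : T.degree v = 3 := hcubic v hdeg
  have hvb : v ≠ b := by
    rintro rfl
    exact bridge hT hab hvreach.symm
  -- get three distinct neighbours
  obtain ⟨w1, w2, w3, h12, h13, h23, hnbr⟩ :=
    Finset.card_eq_three.mp (by rw [← hv3]; rfl : (T.neighborFinset v).card = 3)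
  have hadj : ∀ w ∈ T.neighborFinset v, T.Adj v w := fun w hw =>
    (mem_neighborFinset T v w).mp hw
  have hup : ∃ w, T.Adj v w ∧ T.dist b v < T.dist b w := by
    by_contra hno
    push_neg at hno
    have hlt : ∀ w ∈ T.neighborFinset v, T.dist b w < T.dist b v := by
      intro w hw
      have h1 := hno w (hadj w hw)
      have h2 := dist_ne hT (hadj w hw) (b := b)
      omega
    have e12 : w1 = w2 := desc_unique hT
      (hadj w1 (by simp [hnbr])) (hadj w2 (by simp [hnbr]))
      (hlt w1 (by simp [hnbr])) (hlt w2 (by simp [hnbr]))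
    exact h12 e12
  obtain ⟨w, hvw, hwdist⟩ := hup
  have hwb : w ≠ b := by
    rintro rfl
    rw [SimpleGraph.dist_self] at hwdist
    omega
  have hedge : s(v, w) ≠ s(a, b) := by
    intro h
    rw [Sym2.eq_iff] at h
    rcases h with ⟨rfl, rfl⟩ | ⟨rfl, rfl⟩
    · exact hwb rfl
    · exact hvb rfl
  have hadj' : (T.deleteEdges {s(a, b)}).Adj w v := by
    rw [deleteEdges_adj]
    refine ⟨hvw.symm, ?_⟩
    simp only [Set.mem_singleton_iff]
    exact fun h => hedge (Sym2.eq_swap.trans h)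
  have hwS : w ∈ S := by
    simp only [hS, Finset.mem_filter, Finset.mem_univ, true_and]
    exact hadj'.reachable.trans hvreach
  have := hmax w hwS
  omega


lemma three_sum {T : SimpleGraph N} [DecidableRel T.Adj] (hT : T.IsTree) {z b1 b2 b3 : N}
    (hnbr : T.neighborFinset z = {b1, b2, b3}) (hdeg : T.degree z = 3)
    (h12 : b1 ≠ b2) (h13 : b1 ≠ b3) (h23 : b2 ≠ b3) :
    ({v : N | T.degree v = 1} ∩ {v : N | (T.deleteEdges {s(b1, z)}).Reachable v b1}).ncard
    + ({v : N | T.degree v = 1} ∩ {v : N | (T.deleteEdges {s(b2, z)}).Reachable v b2}).ncard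
    + ({v : N | T.degree v = 1} ∩ {v : N | (T.deleteEdges {s(b3, z)}).Reachable v b3}).ncard
    = {v : N | T.degree v = 1}.ncard := by
  have hadjz : ∀ c ∈ T.neighborFinset z, T.Adj c z := fun c hc =>
    ((mem_neighborFinset T z c).mp hc).symm
  have h1z : T.Adj b1 z := hadjz b1 (by simp [hnbr])
  have h2z : T.Adj b2 z := hadjz b2 (by simp [hnbr])
  have h3z : T.Adj b3 z := hadjz b3 (by simp [hnbr])
  set Sf : N → Set N := fun c =>
    {v : N | T.degree v = 1} ∩ {v : N | (T.deleteEdges {s(c, z)}).Reachable v c} with hSf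
  have disj : ∀ c d : N, T.Adj c z → T.Adj d z → c ≠ d → Disjoint (Sf c) (Sf d) := by
    intro c d hcz hdz hcd
    rw [Set.disjoint_left]
    rintro v ⟨-, h1⟩ ⟨-, h2⟩
    obtain ⟨p, hp⟩ := exists_walk_avoid hT hdz h2
    have hvd : (T.deleteEdges {s(c, z)}).Reachable v d :=
      reach_transfer (deleteEdges_le _) p hp (by simp)
    have hadj' : (T.deleteEdges {s(c, z)}).Adj d z := by
      rw [deleteEdges_adj]
      refine ⟨hdz, ?_⟩
      simp only [Set.mem_singleton_iff]
      intro h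
      rw [Sym2.eq_iff] at h
      rcases h with ⟨rfl, -⟩ | ⟨rfl, -⟩
      · exact hcd rfl
      · exact hdz.ne rfl
    exact bridge hT hcz ((Reachable.symm h1).trans (hvd.trans hadj'.reachable))
  have cover : ∀ v : N, T.degree v = 1 → v ∈ Sf b1 ∪ Sf b2 ∪ Sf b3 := by
    intro v hv
    have hvz : v ≠ z := fun h => by rw [h, hdeg] at hv; omega
    obtain ⟨u, q, huz, hz⟩ := exists_first_step (hT.isConnected v z) hvz
    have hu : u ∈ T.neighborFinset z := (mem_neighborFinset T z u).mpr huz.symm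
    rw [hnbr] at hu
    have hreach : ∀ c : N, u = c → (T.deleteEdges {s(c, z)}).Reachable v c := by
      rintro c rfl
      exact reach_transfer le_rfl q hz (by simp)
    simp only [Finset.mem_insert, Finset.mem_singleton] at hu
    rcases hu with rfl | rfl | rfl
    · exact Or.inl (Or.inl ⟨hv, hreach u rfl⟩)
    · exact Or.inl (Or.inr ⟨hv, hreach u rfl⟩)
    · exact Or.inr ⟨hv, hreach u rfl⟩
  have d12 := disj b1 b2 h1z h2z h12
  have d13 := disj b1 b3 h1z h3z h13
  have d23 := disj b2 b3 h2z h3z h23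
  have hU : Sf b1 ∪ Sf b2 ∪ Sf b3 = {v : N | T.degree v = 1} := by
    apply Set.Subset.antisymm
    · rintro v ((⟨h, -⟩ | ⟨h, -⟩) | ⟨h, -⟩) <;> exact h
    · exact fun v hv => cover v hv
  calc (Sf b1).ncard + (Sf b2).ncard + (Sf b3).ncard
      = (Sf b1 ∪ Sf b2).ncard + (Sf b3).ncard := by
        rw [Set.ncard_union_eq d12 (Set.toFinite _) (Set.toFinite _)]
    _ = (Sf b1 ∪ Sf b2 ∪ Sf b3).ncard := by
        rw [Set.ncard_union_eq (Disjoint.union_left d13 d23) (Set.toFinite _) (Set.toFinite _)]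
    _ = {v : N | T.degree v = 1}.ncard := by rw [hU]

lemma key {T : SimpleGraph N} [DecidableRel T.Adj]
    (hT : T.IsTree) (hN : 4 ≤ Fintype.card N)
    (hcubic : ∀ v : N, T.degree v ≠ 1 → T.degree v = 3)
    (leafSide : N → N → ℕ)
    (hleafSide : ∀ a b : N, leafSide a b =
      ({v : N | T.degree v = 1} ∩
        {v : N | (T.deleteEdges {s(a, b)}).Reachable v a}).ncard)
    (A : N → N → Prop)
    (hA1 : ∀ a b : N, A a b → T.Adj a b)
    (hA2 : ∀ a b : N, T.Adj a b → (A a b ↔ 2 * leafSide a b < leafSide b a))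
    (hA3 : ∀ a b : N, T.Adj a b → (A a b ∨ A b a)) : False := by
  classical
  have hLsum : ∀ a b : N, T.Adj a b →
      leafSide a b + leafSide b a = {v : N | T.degree v = 1}.ncard := by
    intro a b hab
    rw [hleafSide a b, hleafSide b a]
    exact side_sum hT hab
  have hge1 : ∀ a b : N, T.Adj a b → 1 ≤ leafSide a b := by
    intro a b hab
    obtain ⟨v, hv1, hv2⟩ := exists_leaf_side hT hcubic hab
    rw [hleafSide a b]
    exact (Set.ncard_pos (Set.toFinite _)).mpr ⟨v, hv1, hv2⟩
  -- there is a directed edge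
  have hEdge : ∃ a b : N, T.Adj a b := by
    have hnt : Nontrivial N := Fintype.one_lt_card_iff_nontrivial.mp (by omega)
    obtain ⟨u, v, huv⟩ := hnt
    obtain ⟨p⟩ := hT.isConnected u v
    cases p with
    | nil => exact absurd rfl huv
    | cons h q => exact ⟨_, _, h⟩
  have hKne : ({n : ℕ | ∃ a b : N, A a b ∧ leafSide b a = n}).Nonempty := by
    obtain ⟨a, b, hab⟩ := hEdge
    rcases hA3 a b hab with h | h
    · exact ⟨_, a, b, h, rfl⟩
    · exact ⟨_, b, a, h, rfl⟩
  obtain ⟨a, b, hAab, hk⟩ := Nat.sInf_mem hKne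
  have hab : T.Adj a b := hA1 a b hAab
  have hineq : 2 * leafSide a b < leafSide b a := (hA2 a b hab).mp hAab
  -- b is not a leaf
  have hbdeg : T.degree b ≠ 1 := by
    intro h1
    have hle := deg_one_side hT hab h1
    rw [← hleafSide b a] at hle
    have := hge1 a b hab
    omega
  have hdeg3 : T.degree b = 3 := hcubic b hbdeg
  -- b is a sink
  have hsink : ∀ c : N, ¬ A b c := by
    intro c hAbc
    have hbc : T.Adj b c := hA1 b c hAbc
    have hca : c ≠ a := by
      intro hce
      subst hce
      have h1 := (hA2 c b hab).mp hAab
      have h2 := (hA2 b c hbc).mp hAbc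
      omega
    -- third neighbour d of b
    have hmemA : a ∈ T.neighborFinset b := (mem_neighborFinset T b a).mpr hab.symm
    have hmemC : c ∈ T.neighborFinset b := (mem_neighborFinset T b c).mpr hbc
    have hnsub : ¬ T.neighborFinset b ⊆ ({a, c} : Finset N) := by
      intro hsub
      have h1 := Finset.card_le_card hsub
      have h2 : ({a, c} : Finset N).card ≤ 2 := Finset.card_insert_le a {c}
      have h3 : (T.neighborFinset b).card = 3 := hdeg3
      omega
    obtain ⟨d, hdmem, hdnot⟩ := Finset.not_subset.mp hnsub
    simp only [Finset.mem_insert, Finset.mem_singleton, not_or] at hdnot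
    obtain ⟨hda, hdc⟩ := hdnot
    have hbd : T.Adj b d := (mem_neighborFinset T b d).mp hdmem
    -- the a-side of ab is contained in the b-side of bc
    have hsubset : ({v : N | T.degree v = 1} ∩
        {v : N | (T.deleteEdges {s(a, b)}).Reachable v a}) ⊆
        ({v : N | T.degree v = 1} ∩
        {v : N | (T.deleteEdges {s(b, c)}).Reachable v b}) := by
      rintro v ⟨hv1, hv2⟩
      refine ⟨hv1, ?_⟩
      obtain ⟨p, hp⟩ := exists_walk_avoid hT hab hv2
      have h1 : (T.deleteEdges {s(b, c)}).Reachable v a :=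
        reach_transfer (deleteEdges_le _) p hp (by simp)
      have h2 : (T.deleteEdges {s(b, c)}).Adj a b := by
        rw [deleteEdges_adj]
        refine ⟨hab, ?_⟩
        simp only [Set.mem_singleton_iff]
        intro h
        rw [Sym2.eq_iff] at h
        rcases h with ⟨rfl, -⟩ | ⟨rfl, -⟩
        · exact hab.ne rfl
        · exact hca rfl
      exact h1.trans h2.reachable
    -- a leaf on the d-side of bd
    obtain ⟨w, hw1, hw2⟩ := exists_leaf_side hT hcubic hbd.symm
    obtain ⟨p, hp⟩ := exists_walk_avoid hT hbd.symm hw2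
    have hwbc : (T.deleteEdges {s(b, c)}).Reachable w b := by
      have h1 : (T.deleteEdges {s(b, c)}).Reachable w d :=
        reach_transfer (deleteEdges_le _) p hp (by simp)
      have h2 : (T.deleteEdges {s(b, c)}).Adj d b := by
        rw [deleteEdges_adj]
        refine ⟨hbd.symm, ?_⟩
        simp only [Set.mem_singleton_iff]
        intro h
        rw [Sym2.eq_iff] at h
        rcases h with ⟨rfl, -⟩ | ⟨rfl, -⟩
        · exact hbd.ne rfl
        · exact hdc rfl
      exact h1.trans h2.reachable
    have hwba : (T.deleteEdges {s(a, b)}).Reachable w b := by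
      have h1 : (T.deleteEdges {s(a, b)}).Reachable w d :=
        reach_transfer (deleteEdges_le _) p hp (by simp)
      have h2 : (T.deleteEdges {s(a, b)}).Adj d b := by
        rw [deleteEdges_adj]
        refine ⟨hbd.symm, ?_⟩
        simp only [Set.mem_singleton_iff]
        intro h
        rw [Sym2.eq_iff] at h
        rcases h with ⟨rfl, -⟩ | ⟨rfl, -⟩
        · exact hda rfl
        · exact hbd.ne rfl
      exact h1.trans h2.reachable
    have hwnot : w ∉ ({v : N | T.degree v = 1} ∩
        {v : N | (T.deleteEdges {s(a, b)}).Reachable v a}) := by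
      rintro ⟨-, hr⟩
      exact bridge hT hab ((Reachable.symm hr).trans hwba)
    have hcard : leafSide a b + 1 ≤ leafSide b c := by
      rw [hleafSide a b, hleafSide b c]
      have hins : insert w ({v : N | T.degree v = 1} ∩
          {v : N | (T.deleteEdges {s(a, b)}).Reachable v a}) ⊆
          ({v : N | T.degree v = 1} ∩
          {v : N | (T.deleteEdges {s(b, c)}).Reachable v b}) :=
        Set.insert_subset ⟨hw1, hwbc⟩ hsubset
      calc ({v : N | T.degree v = 1} ∩
          {v : N | (T.deleteEdges {s(a, b)}).Reachable v a}).ncard + 1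
          = (insert w ({v : N | T.degree v = 1} ∩
            {v : N | (T.deleteEdges {s(a, b)}).Reachable v a})).ncard :=
            (Set.ncard_insert_of_notMem hwnot (Set.toFinite _)).symm
        _ ≤ _ := Set.ncard_le_ncard hins (Set.toFinite _)
    have hs1 := hLsum a b hab
    have hs2 := hLsum b c hbc
    have hmin : sInf {n : ℕ | ∃ a b : N, A a b ∧ leafSide b a = n} ≤ leafSide c b :=
      Nat.sInf_le ⟨b, c, hAbc, rfl⟩
    omega
  -- final contradiction at the internal sink b
  obtain ⟨c1, c2, c3, h12, h13, h23, hnbr⟩ := Finset.card_eq_three.mp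
    (show (T.neighborFinset b).card = 3 from hdeg3)
  have hadjs : ∀ c ∈ T.neighborFinset b, T.Adj c b := fun c hc =>
    ((mem_neighborFinset T b c).mp hc).symm
  have hAi : ∀ c ∈ T.neighborFinset b, 2 * leafSide c b < leafSide b c := by
    intro c hc
    have hcb : T.Adj c b := hadjs c hc
    rcases hA3 c b hcb with h | h
    · exact (hA2 c b hcb).mp h
    · exact absurd h (hsink c)
  have hsum3 := three_sum hT hnbr hdeg3 h12 h13 h23
  rw [← hleafSide c1 b, ← hleafSide c2 b, ← hleafSide c3 b] at hsum3
  have m1 : c1 ∈ T.neighborFinset b := by simp [hnbr]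
  have m2 : c2 ∈ T.neighborFinset b := by simp [hnbr]
  have m3 : c3 ∈ T.neighborFinset b := by simp [hnbr]
  have e1 := hLsum c1 b (hadjs c1 m1)
  have e2 := hLsum c2 b (hadjs c2 m2)
  have e3 := hLsum c3 b (hadjs c3 m3)
  have a1 := hAi c1 m1
  have a2 := hAi c2 m2
  have a3 := hAi c3 m3
  omega

end Stmt12Aux

open Stmt12Aux in
/-- Let `T` be a cubic tree with at least 4 nodes in which every edge is
oriented.  If each edge `ab` is oriented from the side `Y_e` of `a` toward the
side `Z_e` of `b` exactly when `2|L(Y_e)| < |L(Z_e)|`, and every edge is so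
oriented, then `T` has a sink which is an internal node, and moreover this
situation yields a contradiction — hence some edge of `T` fails
`2|L(Y_e)| < |L(Z_e)|` for both of its sides. -/
theorem stmt12 {N : Type*} [Fintype N] [DecidableEq N]
    (T : SimpleGraph N) [DecidableRel T.Adj]
    (hT : T.IsTree) (hN : 4 ≤ Fintype.card N)
    (hcubic : ∀ v : N, T.degree v ≠ 1 → T.degree v = 3)
    (leafSide : N → N → ℕ)
    (hleafSide : ∀ a b : N, leafSide a b =
      ({v : N | T.degree v = 1} ∩
        {v : N | (T.deleteEdges {s(a, b)}).Reachable v a}).ncard) :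
    -- (1) any complete orientation following the rule has a sink that is internal
    (∀ A : N → N → Prop,
      (∀ a b : N, A a b → T.Adj a b) →
      (∀ a b : N, T.Adj a b → (A a b ↔ 2 * leafSide a b < leafSide b a)) →
      (∀ a b : N, T.Adj a b → (A a b ∨ A b a)) →
      ∃ s : N, (∀ b : N, ¬ A s b) ∧ T.degree s ≠ 1) ∧
    -- (2) ... and in fact such a complete orientation cannot exist
    (∀ A : N → N → Prop,
      (∀ a b : N, A a b → T.Adj a b) →
      (∀ a b : N, T.Adj a b → (A a b ↔ 2 * leafSide a b < leafSide b a)) →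
      (∀ a b : N, T.Adj a b → (A a b ∨ A b a)) →
      False) ∧
    -- (3) hence some edge fails the strict inequality on both sides
    (∃ a b : N, T.Adj a b ∧
      ¬ 2 * leafSide a b < leafSide b a ∧ ¬ 2 * leafSide b a < leafSide a b) := by
  refine ⟨fun A h1 h2 h3 => (key hT hN hcubic leafSide hleafSide A h1 h2 h3).elim,
    fun A h1 h2 h3 => key hT hN hcubic leafSide hleafSide A h1 h2 h3, ?_⟩
  by_contra h
  apply key hT hN hcubic leafSide hleafSide
    (fun a b => T.Adj a b ∧ 2 * leafSide a b < leafSide b a)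
  · exact fun a b hx => hx.1
  · exact fun a b hab => ⟨fun hx => hx.2, fun hx => ⟨hab, hx⟩⟩
  · intro a b hab
    by_cases hP : 2 * leafSide a b < leafSide b a
    · exact Or.inl ⟨hab, hP⟩
    · by_cases hQ : 2 * leafSide b a < leafSide a b
      · exact Or.inr ⟨hab.symm, hQ⟩
      · exact absurd ⟨a, b, hab, hP, hQ⟩ h
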